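/- arXiv:math/0104020 — 2 statements merged into one kernel-verified Lean document; each statement's English description precedes it below -/
import Mathlib

section
/- The closed subgroup of SO(n) generated by the set of matrices of the form N⁻¹(NNᵀ)^{1/2}, where N ranges over all products of two symmetric positive definite n×n real matrices, coincides with SO(n). Equivalently, the smallest topologically closed subgroup of SO(n) containing {N⁻¹(NNᵀ)^{1/2} : N ∈ K} is all of SO(n). -/
open Matrix
open scoped Classical

/-- The unique symmetric positive semidefinite square root of a positive semidefinite
real matrix (junk value `0` for matrices that are not positive semidefinite). -/
noncomputable def msqrt {n : ℕ} (A : Matrix (Fin n) (Fin n) ℝ) :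
    Matrix (Fin n) (Fin n) ℝ :=
  if h : A.PosSemidef then
    (h.1.eigenvectorUnitary : Matrix (Fin n) (Fin n) ℝ) *
      diagonal ((↑) ∘ (√·) ∘ h.1.eigenvalues) *
      (star (h.1.eigenvectorUnitary : Matrix (Fin n) (Fin n) ℝ))
  else 0

/-- `SO(n)`, the set of `n × n` real orthogonal matrices of determinant `1`. -/
def SOset (n : ℕ) : Set (Matrix (Fin n) (Fin n) ℝ) :=
  {Q | Q * Qᵀ = 1 ∧ Q.det = 1}

/-- The generating set: all matrices `N⁻¹ * (N * Nᵀ)^{1/2}` where `N` ranges over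
products of two symmetric positive definite matrices. -/
def genSet (n : ℕ) : Set (Matrix (Fin n) (Fin n) ℝ) :=
  {Q | ∃ N X S : Matrix (Fin n) (Fin n) ℝ, X.PosDef ∧ S.PosDef ∧ N = X * S ∧
    Q = N⁻¹ * msqrt (N * Nᵀ)}

namespace SO4aux

variable {n : ℕ}

open scoped MatrixOrder

lemma msqrt_eq {A : Matrix (Fin n) (Fin n) ℝ} (h : A.PosSemidef) : msqrt A = CFC.sqrt A := by
  rw [msqrt, dif_pos h, CFC.sqrt_eq_cfc, cfc_nnreal_eq_real _ A, h.1.cfc_eq]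
  simp only [IsHermitian.cfc, Unitary.conjStarAlgAut_apply]
  congr 3
  funext k
  simp [Real.coe_toNNReal', max_eq_left (h.eigenvalues_nonneg k)]

/-- matrices that are the identity except on the `{i,j}` block -/
noncomputable def bmat (i j : Fin n) (a b d e : ℝ) : Matrix (Fin n) (Fin n) ℝ :=
  1 + single i i (a-1) + single i j b + single j i d
    + single j j (e-1)

lemma bmat_apply {i j : Fin n} (hij : i ≠ j) (a b d e : ℝ) (p q : Fin n) :
    bmat i j a b d e p q =
      if p = i then (if q = i then a else if q = j then b else 0)
      else if p = j then (if q = i then d else if q = j then e else 0)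
      else if p = q then 1 else 0 := by
  simp only [bmat, Matrix.add_apply, Matrix.one_apply, single, of_apply]
  by_cases hpi : p = i <;> by_cases hpj : p = j <;> by_cases hqi : q = i <;>
    by_cases hqj : q = j <;> subst_vars <;> simp_all [eq_comm] <;> ring

lemma bmat_mul_apply {i j : Fin n} (hij : i ≠ j) (a b d e : ℝ)
    (M : Matrix (Fin n) (Fin n) ℝ) (p q : Fin n) :
    (bmat i j a b d e * M) p q =
      if p = i then a * M i q + b * M j q
      else if p = j then d * M i q + e * M j q
      else M p q := by
  simp only [bmat, add_mul, Matrix.one_mul, Matrix.add_apply]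
  by_cases hpi : p = i
  · subst hpi
    rw [single_mul_apply_same, single_mul_apply_same,
      single_mul_apply_of_ne _ _ _ _ _ hij,
      single_mul_apply_of_ne _ _ _ _ _ hij, if_pos rfl]
    ring
  · by_cases hpj : p = j
    · subst hpj
      rw [single_mul_apply_same, single_mul_apply_same,
        single_mul_apply_of_ne _ _ _ _ _ hpi,
        single_mul_apply_of_ne _ _ _ _ _ hpi, if_neg hpi, if_pos rfl]
      ring
    · rw [single_mul_apply_of_ne _ _ _ _ _ hpi,
        single_mul_apply_of_ne _ _ _ _ _ hpi,
        single_mul_apply_of_ne _ _ _ _ _ hpj,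
        single_mul_apply_of_ne _ _ _ _ _ hpj, if_neg hpi, if_neg hpj]
      ring


lemma two_point_sum {i j : Fin n} (hij : i ≠ j) (a b : ℝ) (x : Fin n → ℝ) :
    ∑ q, (if q = i then a else if q = j then b else 0) * x q = a * x i + b * x j := by
  have h : ∀ q, (if q = i then a else if q = j then b else 0) * x q
      = (if q = i then a * x i else 0) + (if q = j then b * x j else 0) := by
    intro q
    by_cases h1 : q = i <;> by_cases h2 : q = j <;> subst_vars <;> simp_all
  simp [h, Finset.sum_add_distrib]

lemma bmat_mulVec {i j : Fin n} (hij : i ≠ j) (a b d e : ℝ) (x : Fin n → ℝ) (p : Fin n) :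
    (bmat i j a b d e *ᵥ x) p =
      if p = i then a * x i + b * x j
      else if p = j then d * x i + e * x j
      else x p := by
  have : (bmat i j a b d e *ᵥ x) p = ∑ q, bmat i j a b d e p q * x q := by
    simp [Matrix.mulVec, dotProduct]
  rw [this]
  simp only [bmat_apply hij]
  by_cases hpi : p = i
  · simp only [if_pos hpi]
    exact two_point_sum hij a b x
  · simp only [if_neg hpi]
    by_cases hpj : p = j
    · simp only [if_pos hpj]
      exact two_point_sum hij d e x
    · simp only [if_neg hpj]
      simp [ite_mul]

lemma bmat_transpose {i j : Fin n} (hij : i ≠ j) (a b d e : ℝ) :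
    (bmat i j a b d e)ᵀ = bmat i j a d b e := by
  ext p q
  rw [transpose_apply, bmat_apply hij, bmat_apply hij]
  by_cases hpi : p = i <;> by_cases hpj : p = j <;> by_cases hqi : q = i <;>
    by_cases hqj : q = j <;> subst_vars <;> simp_all [eq_comm]

lemma bmat_one (i j : Fin n) : bmat i j 1 0 0 1 = 1 := by
  simp [bmat]

lemma bmat_mul {i j : Fin n} (hij : i ≠ j) (a b d e a' b' d' e' : ℝ) :
    bmat i j a b d e * bmat i j a' b' d' e' =
      bmat i j (a*a'+b*d') (a*b'+b*e') (d*a'+e*d') (d*b'+e*e') := by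
  ext p q
  rw [bmat_mul_apply hij, bmat_apply hij, bmat_apply hij, bmat_apply hij, bmat_apply hij]
  by_cases hpi : p = i <;> by_cases hpj : p = j <;> by_cases hqi : q = i <;>
    by_cases hqj : q = j <;> subst_vars <;> simp_all [eq_comm] <;> ring

lemma bmat_posDef {i j : Fin n} (hij : i ≠ j) {a b e : ℝ} (ha : 0 < a)
    (hdet : b ^ 2 < a * e) : (bmat i j a b b e).PosDef := by
  refine Matrix.PosDef.of_dotProduct_mulVec_pos ?_ ?_
  · rw [Matrix.IsHermitian, conjTranspose_eq_transpose_of_trivial, bmat_transpose hij]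
  · intro x hx
    have hstar : star x = x := by simp
    rw [hstar]
    have key : dotProduct x (bmat i j a b b e *ᵥ x) =
        (a * x i ^ 2 + 2 * b * x i * x j + e * x j ^ 2)
          + ∑ p, (if p = i ∨ p = j then 0 else x p ^ 2) := by
      rw [dotProduct]
      have h : ∀ p, x p * (bmat i j a b b e *ᵥ x) p
          = ((if p = i then a * x i ^ 2 + b * x i * x j else 0)
            + (if p = j then b * x i * x j + e * x j ^ 2 else 0))
            + (if p = i ∨ p = j then 0 else x p ^ 2) := by
        intro p
        rw [bmat_mulVec hij]
        by_cases h1 : p = i <;> by_cases h2 : p = j <;> subst_vars <;> simp_all <;> ring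
      rw [Finset.sum_congr rfl (fun p _ => h p), Finset.sum_add_distrib,
        Finset.sum_add_distrib]
      simp
      ring
    rw [key]
    have hrest : (0:ℝ) ≤ ∑ p, (if p = i ∨ p = j then 0 else x p ^ 2) :=
      Finset.sum_nonneg (fun p _ => by positivity)
    by_cases h0 : x i = 0 ∧ x j = 0
    · obtain ⟨p, hp⟩ := Function.ne_iff.mp hx
      have hpi : p ≠ i := fun h => hp (by rw [h]; exact h0.1)
      have hpj : p ≠ j := fun h => hp (by rw [h]; exact h0.2)
      have hterm : (fun p => if p = i ∨ p = j then (0:ℝ) else x p ^ 2) p = x p ^ 2 := by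
        simp [hpi, hpj]
      have hle : x p ^ 2 ≤ ∑ p, (if p = i ∨ p = j then 0 else x p ^ 2) := by
        rw [← hterm]
        exact Finset.single_le_sum (f := fun p => if p = i ∨ p = j then (0:ℝ) else x p ^ 2)
          (fun p _ => by positivity) (Finset.mem_univ p)
      have hp' : x p ≠ 0 := by simpa using hp
      have : 0 < x p ^ 2 := by positivity
      rw [h0.1, h0.2]
      nlinarith
    · have hq : 0 < a * x i ^ 2 + 2 * b * x i * x j + e * x j ^ 2 := by
        by_cases hj : x j = 0
        · have hi : x i ≠ 0 := fun h => h0 ⟨h, hj⟩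
          rw [hj]
          have : 0 < x i ^ 2 := by positivity
          nlinarith
        · have h1 : 0 < (a * x i + b * x j) ^ 2 + (a * e - b ^ 2) * x j ^ 2 := by
            have : 0 < (a * e - b ^ 2) * x j ^ 2 := by
              apply mul_pos (by linarith) (by positivity)
            nlinarith [sq_nonneg (a * x i + b * x j)]
          nlinarith
      linarith


/-- Givens rotation by angle `θ` in the `(i,j)` plane. -/
noncomputable def giv (i j : Fin n) (θ : ℝ) : Matrix (Fin n) (Fin n) ℝ :=
  bmat i j (Real.cos θ) (-Real.sin θ) (Real.sin θ) (Real.cos θ)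

lemma giv_mul {i j : Fin n} (hij : i ≠ j) (θ φ : ℝ) :
    giv i j θ * giv i j φ = giv i j (θ + φ) := by
  rw [giv, giv, giv, bmat_mul hij, Real.cos_add, Real.sin_add]
  congr 1 <;> ring

lemma giv_zero (i j : Fin n) : giv i j 0 = 1 := by
  simp [giv, bmat_one]

lemma giv_transpose {i j : Fin n} (hij : i ≠ j) (θ : ℝ) :
    (giv i j θ)ᵀ = giv i j (-θ) := by
  rw [giv, bmat_transpose hij, giv, Real.cos_neg, Real.sin_neg, neg_neg]

lemma giv_orth {i j : Fin n} (hij : i ≠ j) (θ : ℝ) :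
    giv i j θ * (giv i j θ)ᵀ = 1 := by
  rw [giv_transpose hij, giv_mul hij, add_neg_cancel, giv_zero]

lemma giv_mul_apply {i j : Fin n} (hij : i ≠ j) (θ : ℝ)
    (M : Matrix (Fin n) (Fin n) ℝ) (p q : Fin n) :
    (giv i j θ * M) p q =
      if p = i then Real.cos θ * M i q - Real.sin θ * M j q
      else if p = j then Real.sin θ * M i q + Real.cos θ * M j q
      else M p q := by
  rw [giv, bmat_mul_apply hij]
  by_cases h1 : p = i <;> by_cases h2 : p = j <;> simp_all <;> ring

/-- Key lemma: if `X * S * R` is positive definite with `X, S` positive definite and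
`R` orthogonal, then `R` lies in `genSet`. -/
lemma mem_genSet_of {X S R : Matrix (Fin n) (Fin n) ℝ} (hX : X.PosDef) (hS : S.PosDef)
    (hR : R * Rᵀ = 1) (hM : (X * S * R).PosDef) : R ∈ genSet n := by
  refine ⟨X * S, X, S, hX, hS, rfl, ?_⟩
  have hRtR : Rᵀ * R = 1 := mul_eq_one_comm.mp hR
  have hMsymm : (X * S * R)ᵀ = X * S * R := by
    have := hM.isHermitian
    rwa [Matrix.IsHermitian, conjTranspose_eq_transpose_of_trivial] at this
  have hN : X * S = (X * S * R) * Rᵀ := by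
    rw [Matrix.mul_assoc, hR, Matrix.mul_one]
  have hNNt : (X * S) * (X * S)ᵀ = (X * S * R) * (X * S * R) := by
    calc (X * S) * (X * S)ᵀ = (X * S * R) * Rᵀ * ((X * S * R) * Rᵀ)ᵀ := by rw [← hN]
    _ = (X * S * R) * (Rᵀ * (Rᵀᵀ * (X * S * R)ᵀ)) := by
        rw [transpose_mul, Matrix.mul_assoc, Matrix.mul_assoc]
    _ = (X * S * R) * (X * S * R) := by
        rw [transpose_transpose, ← Matrix.mul_assoc Rᵀ, hRtR, Matrix.one_mul, hMsymm]
  have hPSD : ((X * S) * (X * S)ᵀ).PosSemidef := by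
    rw [hNNt]
    have := Matrix.posSemidef_self_mul_conjTranspose (X * S * R)
    rwa [conjTranspose_eq_transpose_of_trivial, hMsymm] at this
  have hmsqrt : msqrt ((X * S) * (X * S)ᵀ) = X * S * R := by
    rw [msqrt_eq hPSD]
    exact CFC.sqrt_unique hNNt.symm hM.posSemidef.nonneg
  have hdet : IsUnit (X * S).det := by
    rw [Matrix.det_mul]
    exact (mul_pos hX.det_pos hS.det_pos).ne'.isUnit
  rw [hmsqrt, ← Matrix.mul_assoc, Matrix.nonsing_inv_mul _ hdet, Matrix.one_mul]

lemma giv_mem_genSet {i j : Fin n} (hij : i ≠ j) {θ : ℝ} (h0 : 0 < θ)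
    (h4 : θ < Real.pi / 4) : giv i j θ ∈ genSet n := by
  have hpi := Real.pi_pos
  set c := Real.cos θ with hc_def
  set s := Real.sin θ with hs_def
  have hc : 0 < c := Real.cos_pos_of_mem_Ioo ⟨by linarith, by linarith⟩
  have hs : 0 < s := Real.sin_pos_of_pos_of_lt_pi h0 (by linarith)
  have hpyth : s ^ 2 + c ^ 2 = 1 := Real.sin_sq_add_cos_sq θ
  have hsc : s < c := by
    have htan : Real.tan θ < 1 := by
      rw [← Real.tan_pi_div_four]
      exact Real.tan_lt_tan_of_nonneg_of_lt_pi_div_two h0.le (by linarith) h4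
    have := Real.tan_eq_sin_div_cos θ
    rw [this] at htan
    calc s = s / c * c := by field_simp
    _ < 1 * c := by exact mul_lt_mul_of_pos_right htan hc
    _ = c := one_mul c
  set q : ℝ := (s + c) / (2 * c) with hq_def
  have hqc : q * c = (s + c) / 2 := by
    rw [hq_def]; field_simp
  have hq0 : 0 < q := by positivity
  have hq1 : q < 1 := by
    rw [hq_def, div_lt_one (by positivity)]; linarith
  have h1 : 0 < q * c - s := by rw [hqc]; linarith
  have h2 : 0 < q * c + s := by rw [hqc]; linarith
  set v : ℝ := (q * c - s) / (q * c + s) with hv_def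
  have hv0 : 0 < v := by positivity
  have hv : v * (q * c + s) = q * c - s := by
    rw [hv_def]; field_simp
  have hXpd : (bmat i j 1 0 0 v).PosDef := bmat_posDef hij one_pos (by nlinarith)
  have hSpd : (bmat i j 1 q q 1).PosDef := bmat_posDef hij one_pos (by nlinarith)
  apply mem_genSet_of hXpd hSpd (giv_orth hij θ)
  have hprod : bmat i j 1 0 0 v * bmat i j 1 q q 1 * giv i j θ
      = bmat i j (c + q * s) (q * c - s) (q * c - s) (v * (c - q * s)) := by
    rw [giv, ← hc_def, ← hs_def, bmat_mul hij, bmat_mul hij]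
    have e1 : (1*1+0*q)*c + (1*q+0*1)*s = c + q*s := by ring
    have e2 : (1*1+0*q)*(-s) + (1*q+0*1)*c = q*c - s := by ring
    have e3 : (0*1+v*q)*c + (0*q+v*1)*s = q*c - s := by
      calc (0*1+v*q)*c + (0*q+v*1)*s = v*(q*c+s) := by ring
      _ = q*c - s := hv
    have e4 : (0*1+v*q)*(-s) + (0*q+v*1)*c = v*(c-q*s) := by ring
    rw [e1, e2, e3, e4]
  rw [hprod]
  apply bmat_posDef hij (by nlinarith)
  -- (q*c-s)^2 < (c+q*s) * (v*(c-q*s))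
  have expand : (c + q * s) * ((q * c - s) * (c - q * s)) - (q * c - s) ^ 2 * (q * c + s)
      = (q * c - s) * (1 - q ^ 2) * (s ^ 2 + c ^ 2) := by ring
  have key : (q * c - s) ^ 2 * (q * c + s) < (c + q * s) * (v * (c - q * s)) * (q * c + s) := by
    have : (c + q * s) * (v * (c - q * s)) * (q * c + s)
        = (c + q * s) * ((q * c - s) * (c - q * s)) := by
      calc (c + q * s) * (v * (c - q * s)) * (q * c + s)
          = (c + q * s) * (c - q * s) * (v * (q * c + s)) := by ring
      _ = (c + q * s) * (c - q * s) * (q * c - s) := by rw [hv]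
      _ = (c + q * s) * ((q * c - s) * (c - q * s)) := by ring
    rw [this]
    nlinarith [expand, mul_pos (mul_pos h1 (by nlinarith : (0:ℝ) < 1 - q ^ 2)) (by nlinarith : (0:ℝ) < s ^ 2 + c ^ 2)]
  exact lt_of_mul_lt_mul_right (by linarith [key]) h2.le


lemma genSet_subset_SOset : genSet n ⊆ SOset n := by
  rintro Q ⟨N, X, S, hX, hS, rfl, rfl⟩
  have hdetN : 0 < (X * S).det := by
    rw [Matrix.det_mul]; exact mul_pos hX.det_pos hS.det_pos
  have hPSD : ((X * S) * (X * S)ᵀ).PosSemidef := by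
    have := Matrix.posSemidef_self_mul_conjTranspose (X * S)
    rwa [conjTranspose_eq_transpose_of_trivial] at this
  have hmsqrt : msqrt ((X * S) * (X * S)ᵀ) = CFC.sqrt ((X * S) * (X * S)ᵀ) := msqrt_eq hPSD
  set T := CFC.sqrt ((X * S) * (X * S)ᵀ) with hT
  have hTpsd : T.PosSemidef := (CFC.sqrt_nonneg _).posSemidef
  have hTsymm : Tᵀ = T := by
    have := hTpsd.isHermitian
    rwa [Matrix.IsHermitian, conjTranspose_eq_transpose_of_trivial] at this
  have hTT : T * T = (X * S) * (X * S)ᵀ := CFC.sqrt_mul_sqrt_self _ hPSD.nonneg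
  have hTnn : 0 ≤ T.det := by
    obtain ⟨C, hC⟩ := CStarAlgebra.nonneg_iff_eq_star_mul_self.mp hTpsd.nonneg
    rw [hC, Matrix.det_mul, star_eq_conjTranspose, conjTranspose_eq_transpose_of_trivial, Matrix.det_transpose]
    exact mul_self_nonneg _
  have hdetT : T.det = (X * S).det := by
    have h2 : T.det ^ 2 = (X * S).det ^ 2 := by
      calc T.det ^ 2 = (T * T).det := by rw [Matrix.det_mul, sq]
      _ = ((X * S) * (X * S)ᵀ).det := by rw [hTT]
      _ = (X * S).det ^ 2 := by rw [Matrix.det_mul, Matrix.det_transpose, sq]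
    nlinarith
  have hdetTT : IsUnit ((X * S)ᵀ).det := by
    rw [Matrix.det_transpose]; exact hdetN.ne'.isUnit
  rw [hmsqrt]
  constructor
  · rw [transpose_mul, hTsymm, Matrix.transpose_nonsing_inv]
    calc (X * S)⁻¹ * T * (T * ((X * S)ᵀ)⁻¹)
        = (X * S)⁻¹ * ((T * T) * ((X * S)ᵀ)⁻¹) := by
          rw [Matrix.mul_assoc, Matrix.mul_assoc]
    _ = (X * S)⁻¹ * ((X * S) * ((X * S)ᵀ * ((X * S)ᵀ)⁻¹)) := by
          rw [hTT, Matrix.mul_assoc]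
    _ = (X * S)⁻¹ * (X * S) := by
          rw [Matrix.mul_nonsing_inv _ hdetTT, Matrix.mul_one]
    _ = 1 := Matrix.nonsing_inv_mul _ hdetN.ne'.isUnit
  · rw [Matrix.det_mul, Matrix.det_nonsing_inv, Ring.inverse_eq_inv', hdetT]
    exact inv_mul_cancel₀ hdetN.ne'

lemma SOset_one : (1 : Matrix (Fin n) (Fin n) ℝ) ∈ SOset n := ⟨by simp, by simp⟩

lemma SOset_mul {A B : Matrix (Fin n) (Fin n) ℝ} (hA : A ∈ SOset n) (hB : B ∈ SOset n) :
    A * B ∈ SOset n := by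
  refine ⟨?_, by rw [Matrix.det_mul, hA.2, hB.2, one_mul]⟩
  rw [transpose_mul]
  calc A * B * (Bᵀ * Aᵀ) = A * (B * Bᵀ * Aᵀ) := by
        rw [Matrix.mul_assoc, Matrix.mul_assoc]
  _ = 1 := by rw [hB.1, Matrix.one_mul, hA.1]

lemma SOset_inv {A : Matrix (Fin n) (Fin n) ℝ} (hA : A ∈ SOset n) : A⁻¹ ∈ SOset n := by
  rw [Matrix.inv_eq_right_inv hA.1]
  exact ⟨by rw [transpose_transpose]; exact mul_eq_one_comm.mp hA.1,
    by rw [Matrix.det_transpose]; exact hA.2⟩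

lemma giv_nsmul_det {i j : Fin n} (hij : i ≠ j) (φ : ℝ) (N : ℕ) :
    (giv i j ((N : ℝ) * φ)).det = (giv i j φ).det ^ N := by
  induction N with
  | zero => simp [giv_zero]
  | succ N IH =>
    have h : ((N + 1 : ℕ) : ℝ) * φ = (N : ℝ) * φ + φ := by push_cast; ring
    rw [h, ← giv_mul hij, Matrix.det_mul, IH, pow_succ]

lemma giv_det_one {i j : Fin n} (hij : i ≠ j) (θ : ℝ) : (giv i j θ).det = 1 := by
  have hpi := Real.pi_pos
  have hpos : ∀ ψ : ℝ, 0 < ψ → (giv i j ψ).det = 1 := by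
    intro ψ hψ
    obtain ⟨N, hN⟩ := exists_nat_gt (ψ / (Real.pi / 8))
    have hN0 : 0 < (N : ℝ) := lt_trans (by positivity) hN
    have hsmall : ψ / N < Real.pi / 4 := by
      rw [div_lt_iff₀ hN0]
      rw [div_lt_iff₀ (by positivity)] at hN
      nlinarith
    have hdet1 : (giv i j (ψ / N)).det = 1 :=
      (genSet_subset_SOset (giv_mem_genSet hij (by positivity) hsmall)).2
    have h : ψ = (N : ℝ) * (ψ / N) := by field_simp
    rw [h, giv_nsmul_det hij _ N, hdet1, one_pow]
  rcases lt_trichotomy θ 0 with h | h | h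
  · have hmul : giv i j θ * giv i j (-θ) = 1 := by
      rw [giv_mul hij, add_neg_cancel, giv_zero]
    have h2 := congrArg Matrix.det hmul
    rw [Matrix.det_mul, Matrix.det_one, hpos (-θ) (by linarith)] at h2
    linarith
  · rw [h, giv_zero, Matrix.det_one]
  · exact hpos θ h

lemma giv_SOset {i j : Fin n} (hij : i ≠ j) (θ : ℝ) : giv i j θ ∈ SOset n :=
  ⟨giv_orth hij θ, giv_det_one hij θ⟩

lemma giv_mem {G : Set (Matrix (Fin n) (Fin n) ℝ)}
    (h1 : (1 : Matrix (Fin n) (Fin n) ℝ) ∈ G)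
    (hmul : ∀ a ∈ G, ∀ b ∈ G, a * b ∈ G) (hinv : ∀ a ∈ G, a⁻¹ ∈ G)
    (hgen : genSet n ⊆ G) {i j : Fin n} (hij : i ≠ j) (θ : ℝ) : giv i j θ ∈ G := by
  have hpi := Real.pi_pos
  have hnsmul : ∀ N : ℕ, ∀ φ : ℝ, giv i j φ ∈ G → giv i j ((N : ℝ) * φ) ∈ G := by
    intro N
    induction N with
    | zero => intro φ _; simpa [giv_zero] using h1
    | succ N IH =>
      intro φ hφ
      have h : ((N + 1 : ℕ) : ℝ) * φ = (N : ℝ) * φ + φ := by push_cast; ring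
      rw [h, ← giv_mul hij]
      exact hmul _ (IH φ hφ) _ hφ
  have hpos : ∀ ψ : ℝ, 0 < ψ → giv i j ψ ∈ G := by
    intro ψ hψ
    obtain ⟨N, hN⟩ := exists_nat_gt (ψ / (Real.pi / 8))
    have hN0 : 0 < (N : ℝ) := lt_trans (by positivity) hN
    have hsmall : ψ / N < Real.pi / 4 := by
      rw [div_lt_iff₀ hN0]
      rw [div_lt_iff₀ (by positivity)] at hN
      nlinarith
    have hmem : giv i j (ψ / N) ∈ G := hgen (giv_mem_genSet hij (by positivity) hsmall)
    have h : ψ = (N : ℝ) * (ψ / N) := by field_simp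
    rw [h]
    exact hnsmul N _ hmem
  rcases lt_trichotomy θ 0 with h | h | h
  · have : (giv i j (-θ))⁻¹ = giv i j θ :=
      Matrix.inv_eq_right_inv (by rw [giv_mul hij, neg_add_cancel, giv_zero])
    rw [← this]
    exact hinv _ (hpos (-θ) (by linarith))
  · rw [h, giv_zero]; exact h1
  · exact hpos θ h

lemma giv_cancel {i j : Fin n} (hij : i ≠ j) (θ : ℝ) (Q : Matrix (Fin n) (Fin n) ℝ) :
    giv i j (-θ) * (giv i j θ * Q) = Q := by
  rw [← Matrix.mul_assoc, giv_mul hij, neg_add_cancel, giv_zero, Matrix.one_mul]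


/-- `Q` agrees with the identity on all entries with a coordinate `≥ k`. -/
def Supp (k : ℕ) (Q : Matrix (Fin n) (Fin n) ℝ) : Prop :=
  ∀ p q : Fin n, k ≤ (p : ℕ) ∨ k ≤ (q : ℕ) → Q p q = (1 : Matrix (Fin n) (Fin n) ℝ) p q

lemma supp_mul {k : ℕ} {A B : Matrix (Fin n) (Fin n) ℝ} (hA : Supp k A) (hB : Supp k B) :
    Supp k (A * B) := by
  intro p q h
  rcases h with h | h
  · have hrow : ∀ r, A p r = if p = r then 1 else 0 := fun r => by
      rw [hA p r (Or.inl h), Matrix.one_apply]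
    rw [Matrix.mul_apply]
    simp only [hrow, ite_mul, one_mul, zero_mul]
    rw [Finset.sum_ite_eq, if_pos (Finset.mem_univ p)]
    exact hB p q (Or.inl h)
  · have hcol : ∀ r, B r q = if r = q then 1 else 0 := fun r => by
      rw [hB r q (Or.inr h), Matrix.one_apply]
    rw [Matrix.mul_apply]
    simp only [hcol, mul_ite, mul_one, mul_zero]
    rw [Finset.sum_ite_eq', if_pos (Finset.mem_univ q)]
    exact hA p q (Or.inr h)

lemma bmat_eq_one_outside {i j : Fin n} (hij : i ≠ j) (a b d e : ℝ) (p q : Fin n)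
    (h : (p ≠ i ∧ p ≠ j) ∨ (q ≠ i ∧ q ≠ j)) :
    bmat i j a b d e p q = (1 : Matrix (Fin n) (Fin n) ℝ) p q := by
  rw [bmat_apply hij, Matrix.one_apply]
  rcases h with ⟨h1, h2⟩ | ⟨h1, h2⟩
  · rw [if_neg h1, if_neg h2]
  · by_cases hpi : p = i
    · subst hpi
      rw [if_pos rfl, if_neg h1, if_neg h2, if_neg (Ne.symm h1)]
    · by_cases hpj : p = j
      · subst hpj
        rw [if_neg hpi, if_pos rfl, if_neg h1, if_neg h2, if_neg (Ne.symm h2)]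
      · rw [if_neg hpi, if_neg hpj]

lemma supp_giv {k : ℕ} {i j : Fin n} (hij : i ≠ j) (θ : ℝ) (hik : (i : ℕ) < k)
    (hjk : (j : ℕ) < k) : Supp k (giv i j θ) := by
  intro p q h
  rw [giv]
  apply bmat_eq_one_outside hij
  rcases h with h | h
  · exact Or.inl ⟨fun e => by subst e; omega, fun e => by subst e; omega⟩
  · exact Or.inr ⟨fun e => by subst e; omega, fun e => by subst e; omega⟩

lemma exists_cos_sin {c s : ℝ} (h : c ^ 2 + s ^ 2 = 1) :
    ∃ θ, Real.cos θ = c ∧ Real.sin θ = s := by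
  have hc1 : -1 ≤ c := by nlinarith
  have hc2 : c ≤ 1 := by nlinarith
  rcases le_or_gt 0 s with hs | hs
  · exact ⟨Real.arccos c, Real.cos_arccos hc1 hc2, by
      rw [Real.sin_arccos, show 1 - c ^ 2 = s ^ 2 by linarith, Real.sqrt_sq hs]⟩
  · refine ⟨-Real.arccos c, by rw [Real.cos_neg]; exact Real.cos_arccos hc1 hc2, ?_⟩
    rw [Real.sin_neg, Real.sin_arccos, show 1 - c ^ 2 = s ^ 2 by linarith,
      Real.sqrt_sq_eq_abs, abs_of_neg hs, neg_neg]

lemma exists_rot (α β : ℝ) : ∃ θ, Real.cos θ * α - Real.sin θ * β = 0 := by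
  by_cases h : α = 0 ∧ β = 0
  · exact ⟨0, by rw [h.1, h.2]; ring⟩
  · have hr : 0 < α ^ 2 + β ^ 2 := by
      rcases not_and_or.mp h with h' | h'
      · have : α ^ 2 > 0 := by positivity
        nlinarith [sq_nonneg β]
      · have : β ^ 2 > 0 := by positivity
        nlinarith [sq_nonneg α]
    set r := Real.sqrt (α ^ 2 + β ^ 2) with hr_def
    have hr0 : 0 < r := Real.sqrt_pos.mpr hr
    have hrsq : r ^ 2 = α ^ 2 + β ^ 2 := Real.sq_sqrt hr.le
    have hnorm : (β / r) ^ 2 + (α / r) ^ 2 = 1 := by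
      field_simp
      linarith
    obtain ⟨θ, hcθ, hsθ⟩ := exists_cos_sin hnorm
    refine ⟨θ, ?_⟩
    rw [hcθ, hsθ]
    field_simp
    ring

/-- The main generation lemma: any subset of the matrices containing `1` and `genSet`,
closed under multiplication and inverse, contains all of `SO(n)`. -/
lemma SOset_subset_G {G : Set (Matrix (Fin n) (Fin n) ℝ)}
    (h1 : (1 : Matrix (Fin n) (Fin n) ℝ) ∈ G)
    (hmul : ∀ a ∈ G, ∀ b ∈ G, a * b ∈ G) (hinv : ∀ a ∈ G, a⁻¹ ∈ G)
    (hgen : genSet n ⊆ G) : SOset n ⊆ G := by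
  suffices H : ∀ k : ℕ, ∀ Q ∈ SOset n, Supp k Q → Q ∈ G by
    intro Q hQ
    exact H n Q hQ (fun p q h => by
      rcases h with h | h
      · exact absurd h (by have := p.isLt; omega)
      · exact absurd h (by have := q.isLt; omega))
  intro k
  induction k with
  | zero =>
    intro Q _ hS
    have : Q = 1 := by
      ext p q
      exact hS p q (Or.inl (Nat.zero_le _))
    rw [this]; exact h1
  | succ k IH =>
    by_cases hkn : n ≤ k
    · intro Q hQ hS
      refine IH Q hQ (fun p q h => ?_)
      rcases h with h | h
      · exact absurd h (by have := p.isLt; omega)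
      · exact absurd h (by have := q.isLt; omega)
    · push_neg at hkn
      set j : Fin n := ⟨k, hkn⟩ with hj_def
      -- endgame
      have F : ∀ Q ∈ SOset n, Supp (k + 1) Q → (∀ p : Fin n, p ≠ j → Q p j = 0) →
          Q j j = 1 → Q ∈ G := by
        intro Q hQ hS hcol hjj
        have hQtQ : Qᵀ * Q = 1 := mul_eq_one_comm.mp hQ.1
        have hrow : ∀ q : Fin n, q ≠ j → Q j q = 0 := by
          intro q hq
          have h := congrArg (fun M => M q j) hQtQ
          simp only [Matrix.mul_apply, Matrix.transpose_apply, Matrix.one_apply,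
            if_neg hq] at h
          rw [Finset.sum_eq_single j (fun p _ hp => by rw [hcol p hp, mul_zero])
            (fun hj => absurd (Finset.mem_univ j) hj), hjj, mul_one] at h
          exact h
        refine IH Q hQ (fun p q h => ?_)
        rcases h with h | h
        · by_cases hpk : (p : ℕ) = k
          · have hpj : p = j := Fin.ext hpk
            subst hpj
            by_cases hqj : q = j
            · subst hqj; rw [hjj, Matrix.one_apply_eq]
            · rw [hrow q hqj, Matrix.one_apply]
              rw [if_neg (fun e => hqj e.symm)]
          · exact hS p q (Or.inl (by omega))
        · by_cases hqk : (q : ℕ) = k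
          · have hqj : q = j := Fin.ext hqk
            subst hqj
            by_cases hpj : p = j
            · subst hpj; rw [hjj, Matrix.one_apply_eq]
            · rw [hcol p hpj, Matrix.one_apply, if_neg hpj]
          · exact hS p q (Or.inr (by omega))
      -- downward induction on the column reduction
      have D : ∀ t : ℕ, ∀ Q ∈ SOset n, Supp (k + 1) Q →
          (∀ p : Fin n, p ≠ j → (p : ℕ) < k - t → Q p j = 0) → Q ∈ G := by
        intro t
        induction t with
        | zero =>
          intro Q hQ hS hz
          have hcol : ∀ p : Fin n, p ≠ j → Q p j = 0 := by
            intro p hp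
            by_cases hpk : (p : ℕ) < k
            · exact hz p hp (by omega)
            · have hpk1 : k + 1 ≤ (p : ℕ) := by
                rcases Nat.lt_or_ge (p : ℕ) (k + 1) with h' | h'
                · exact absurd (Fin.ext (by omega : (p : ℕ) = k)) hp
                · exact h'
              rw [hS p j (Or.inl hpk1), Matrix.one_apply, if_neg hp]
          have hQtQ : Qᵀ * Q = 1 := mul_eq_one_comm.mp hQ.1
          have hjj : Q j j * Q j j = 1 := by
            have h := congrArg (fun M => M j j) hQtQ
            simp only [Matrix.mul_apply, Matrix.transpose_apply, Matrix.one_apply_eq] at h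
            rw [Finset.sum_eq_single j (fun p _ hp => by rw [hcol p hp]; ring)
              (fun hj => absurd (Finset.mem_univ j) hj)] at h
            exact h
          rcases mul_self_eq_one_iff.mp hjj with hone | hneg
          · exact F Q hQ hS hcol hone
          · by_cases hk0 : k = 0
            · -- det argument
              exfalso
              have hQdiag : Q = Matrix.diagonal (fun p => if p = j then (-1 : ℝ) else 1) := by
                ext p q
                rw [Matrix.diagonal_apply]
                by_cases hpq : p = q
                · subst hpq
                  by_cases hpj : p = j
                  · subst hpj; rw [if_pos rfl, if_pos rfl]; exact hneg
                  · rw [if_pos rfl, if_neg hpj]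
                    have : k + 1 ≤ (p : ℕ) := by
                      have := p.isLt
                      rcases Nat.eq_or_lt_of_le (Nat.zero_le (p : ℕ)) with h' | h'
                      · exact absurd (Fin.ext (by omega : (p : ℕ) = k)) hpj
                      · omega
                    rw [hS p p (Or.inl this), Matrix.one_apply_eq]
                · rw [if_neg hpq]
                  by_cases hqj : q = j
                  · subst hqj
                    exact hcol p hpq
                  · have : k + 1 ≤ (q : ℕ) := by
                      rcases Nat.lt_or_ge (q : ℕ) (k + 1) with h' | h'
                      · exact absurd (Fin.ext (by omega : (q : ℕ) = k)) hqj
                      · exact h'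
                    rw [hS p q (Or.inr this), Matrix.one_apply, if_neg hpq]
              have hdet := hQ.2
              rw [hQdiag, Matrix.det_diagonal] at hdet
              rw [Finset.prod_eq_single j (fun p _ hp => if_neg hp)
                (fun hj => absurd (Finset.mem_univ j) hj), if_pos rfl] at hdet
              linarith
            · -- fix sign with a rotation by π
              set i0 : Fin n := ⟨0, by omega⟩ with hi0_def
              have hi0j : i0 ≠ j := Fin.ne_of_val_ne (by first | (simp [hi0_def, hj_def]; omega) | simp [hi0_def, hj_def] | omega)
              have hgm : ∀ θ, giv i0 j θ ∈ G := giv_mem h1 hmul hinv hgen hi0j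
              have hcospi : Real.cos Real.pi = -1 := Real.cos_pi
              have hsinpi : Real.sin Real.pi = 0 := Real.sin_pi
              have hAQ : giv i0 j Real.pi * Q ∈ G := by
                apply F _ (SOset_mul (giv_SOset hi0j _) hQ)
                  (supp_mul (supp_giv hi0j _ (by first | (simp [hi0_def]; omega) | simp [hi0_def] | omega) (by first | (simp [hj_def]; omega) | simp [hj_def] | omega)) hS)
                · intro p hp
                  rw [giv_mul_apply hi0j]
                  by_cases hpi0 : p = i0
                  · rw [if_pos hpi0, hcospi, hsinpi, hcol i0 hi0j]
                    ring
                  · rw [if_neg hpi0, if_neg hp]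
                    exact hcol p hp
                · rw [giv_mul_apply hi0j, if_neg (Ne.symm hi0j), if_pos rfl,
                    hcospi, hsinpi, hcol i0 hi0j, hneg]
                  ring
              have hrec : giv i0 j (-Real.pi) * (giv i0 j Real.pi * Q) = Q :=
                giv_cancel hi0j _ Q
              rw [← hrec]
              exact hmul _ (hgm _) _ hAQ
        | succ t IHt =>
          intro Q hQ hS hz
          by_cases hkt : k - t = 0
          · exact IHt Q hQ hS (fun p hp hlt => absurd hlt (by omega))
          · set m : ℕ := k - t - 1 with hm_def
            have hmk : m < k := by omega
            set im : Fin n := ⟨m, by omega⟩ with him_def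
            have himj : im ≠ j := Fin.ne_of_val_ne (by first | (simp [him_def, hj_def]; omega) | simp [him_def, hj_def] | omega)
            obtain ⟨θ, hθ⟩ := exists_rot (Q im j) (Q j j)
            have hgm : ∀ ψ, giv im j ψ ∈ G := giv_mem h1 hmul hinv hgen himj
            have hAQ : giv im j θ * Q ∈ G := by
              apply IHt _ (SOset_mul (giv_SOset himj _) hQ)
                (supp_mul (supp_giv himj _ (by first | (simp [him_def]; omega) | simp [him_def] | omega) (by first | (simp [hj_def]; omega) | simp [hj_def] | omega)) hS)
              intro p hp hlt
              rw [giv_mul_apply himj]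
              by_cases hpim : p = im
              · rw [if_pos hpim]
                exact hθ
              · rw [if_neg hpim, if_neg hp]
                apply hz p hp
                have hpm : (p : ℕ) ≠ m := fun e => hpim (Fin.ext e)
                omega
            have hrec : giv im j (-θ) * (giv im j θ * Q) = Q := giv_cancel himj _ Q
            rw [← hrec]
            exact hmul _ (hgm _) _ hAQ
      intro Q hQ hS
      exact D k Q hQ hS (fun p hp hlt => absurd hlt (by omega))

lemma SOset_isClosed : IsClosed (SOset n) := by
  have h1 : IsClosed {Q : Matrix (Fin n) (Fin n) ℝ | Q * Qᵀ = 1} :=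
    isClosed_eq (continuous_id.matrix_mul continuous_id.matrix_transpose) continuous_const
  have h2 : IsClosed {Q : Matrix (Fin n) (Fin n) ℝ | Q.det = 1} :=
    isClosed_eq continuous_id.matrix_det continuous_const
  exact h1.inter h2

end SO4aux

/-- The smallest topologically closed subgroup of `SO(n)` containing all matrices of
the form `N⁻¹ (N Nᵀ)^{1/2}` with `N` a product of two symmetric positive definite
matrices coincides with `SO(n)`: the intersection of all closed subsets of `SO(n)`
that contain the generating set and are closed under multiplication and inversion
is all of `SO(n)`. -/
theorem statement4 (n : ℕ) :
    ⋂₀ {G : Set (Matrix (Fin n) (Fin n) ℝ) |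
        IsClosed G ∧ G ⊆ SOset n ∧ (1 : Matrix (Fin n) (Fin n) ℝ) ∈ G ∧
        (∀ a ∈ G, ∀ b ∈ G, a * b ∈ G) ∧ (∀ a ∈ G, a⁻¹ ∈ G) ∧ genSet n ⊆ G} =
      SOset n := by
  apply subset_antisymm
  · exact Set.sInter_subset_of_mem ⟨SO4aux.SOset_isClosed, subset_rfl, SO4aux.SOset_one,
      fun a ha b hb => SO4aux.SOset_mul ha hb, fun a ha => SO4aux.SOset_inv ha,
      SO4aux.genSet_subset_SOset⟩
  · intro Q hQ G hG
    obtain ⟨-, -, h1, hmul, hinv, hgen⟩ := hG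
    exact SO4aux.SOset_subset_G h1 hmul hinv hgen hQ
end

section
/- (Commutativity of the geometric mean) For all symmetric positive definite n×n real matrices A and B, A#B = B#A; that is, A^{1/2}(A^{-1/2} B A^{-1/2})^{1/2} A^{1/2} = B^{1/2}(B^{-1/2} A B^{-1/2})^{1/2} B^{1/2}. -/
open Matrix
open scoped Classical

/-- The geometric mean `A # B = A^{1/2} (A^{-1/2} B A^{-1/2})^{1/2} A^{1/2}` of two
symmetric positive definite matrices `A` and `B` (here `A^{-1/2} = (A^{1/2})⁻¹`). -/
noncomputable def gmean {n : ℕ} (A B : Matrix (Fin n) (Fin n) ℝ) :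
    Matrix (Fin n) (Fin n) ℝ :=
  msqrt A * msqrt ((msqrt A)⁻¹ * B * (msqrt A)⁻¹) * msqrt A

section aux

variable {n : ℕ}

open scoped MatrixOrder

lemma posDef_of_posSemidef_isUnit {S : Matrix (Fin n) (Fin n) ℝ}
    (hS : S.PosSemidef) (hU : IsUnit S) : S.PosDef := by
  rw [posDef_iff_dotProduct_mulVec]
  refine ⟨hS.1, fun x hx => lt_of_le_of_ne (hS.dotProduct_mulVec_nonneg x) fun h => hx ?_⟩
  have h0 : S *ᵥ x = 0 := (hS.dotProduct_mulVec_zero_iff x).mp h.symm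
  have hinj : Function.Injective S.mulVec :=
    (Matrix.mulVec_injective_iff_isUnit).mpr hU
  exact hinj (show S *ᵥ x = S *ᵥ 0 by simpa using h0)

lemma msqrt_eq {A : Matrix (Fin n) (Fin n) ℝ} (h : A.PosSemidef) :
    msqrt A = CFC.sqrt A := by
  rw [msqrt, dif_pos h, CFC.sqrt_eq_cfc, cfc_nnreal_eq_real _ A, h.1.cfc_eq]
  simp only [IsHermitian.cfc, Unitary.conjStarAlgAut_apply]
  congr 3
  funext i
  simp [Real.coe_sqrt, Real.coe_toNNReal', max_eq_left (h.eigenvalues_nonneg i)]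

lemma msqrt_mul_self {A : Matrix (Fin n) (Fin n) ℝ} (h : A.PosSemidef) :
    msqrt A * msqrt A = A := by
  rw [msqrt_eq h]; exact CFC.sqrt_mul_sqrt_self A h.nonneg

lemma msqrt_posSemidef {A : Matrix (Fin n) (Fin n) ℝ} (h : A.PosSemidef) :
    (msqrt A).PosSemidef := by
  rw [msqrt_eq h]; exact (CFC.sqrt_nonneg A).posSemidef

lemma msqrt_posDef {A : Matrix (Fin n) (Fin n) ℝ} (h : A.PosDef) :
    (msqrt A).PosDef := by
  refine posDef_of_posSemidef_isUnit (msqrt_posSemidef h.posSemidef) ?_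
  rw [Matrix.isUnit_iff_isUnit_det]
  have hdet : (msqrt A).det * (msqrt A).det = A.det := by
    rw [← Matrix.det_mul, msqrt_mul_self h.posSemidef]
  have hA0 : A.det ≠ 0 := h.det_pos.ne'
  have hne : (msqrt A).det ≠ 0 := fun hz => hA0 (by rw [← hdet, hz, zero_mul])
  exact isUnit_iff_ne_zero.mpr hne

lemma posDef_conj {A M : Matrix (Fin n) (Fin n) ℝ} (hA : A.PosDef)
    (hM : IsUnit M) : (Mᴴ * A * M).PosDef := by
  refine posDef_of_posSemidef_isUnit (hA.posSemidef.conjTranspose_mul_mul_same M) ?_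
  rw [Matrix.isUnit_iff_isUnit_det, Matrix.det_mul, Matrix.det_mul, Matrix.det_conjTranspose]
  have hMd : IsUnit M.det := (Matrix.isUnit_iff_isUnit_det M).mp hM
  exact (hMd.mul ((Matrix.isUnit_iff_isUnit_det A).mp hA.isUnit)).mul hMd

/-- `gmean A B` solves the Riccati equation `X A⁻¹ X = B`. -/
lemma gmean_riccati {A B : Matrix (Fin n) (Fin n) ℝ} (hA : A.PosDef) (hB : B.PosDef) :
    (gmean A B).PosDef ∧ gmean A B * A⁻¹ * gmean A B = B := by
  set S := msqrt A with hS
  have hSpd : S.PosDef := msqrt_posDef hA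
  have hSH : Sᴴ = S := hSpd.isHermitian
  have hSS : S * S = A := msqrt_mul_self hA.posSemidef
  have hSU : IsUnit S := hSpd.isUnit
  have hSinvH : (S⁻¹)ᴴ = S⁻¹ := hSpd.inv.isHermitian
  have hinner : ((S⁻¹) * B * (S⁻¹)).PosDef := by
    have := posDef_conj hB hSpd.inv.isUnit
    rwa [hSinvH] at this
  set M := msqrt ((S⁻¹) * B * (S⁻¹)) with hM
  have hMpd : M.PosDef := msqrt_posDef hinner
  have hMM : M * M = (S⁻¹) * B * (S⁻¹) := msqrt_mul_self hinner.posSemidef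
  have hSSinv : S * S⁻¹ = 1 := Matrix.mul_nonsing_inv _ ((Matrix.isUnit_iff_isUnit_det S).mp hSU)
  have hSinvS : S⁻¹ * S = 1 := Matrix.nonsing_inv_mul _ ((Matrix.isUnit_iff_isUnit_det S).mp hSU)
  have hAinv : A⁻¹ = S⁻¹ * S⁻¹ := by rw [← hSS, Matrix.mul_inv_rev]
  constructor
  · have : gmean A B = Sᴴ * M * S := by rw [hSH]; rfl
    rw [this]; exact posDef_conj hMpd hSU
  · show S * M * S * A⁻¹ * (S * M * S) = B
    rw [hAinv]
    calc S * M * S * (S⁻¹ * S⁻¹) * (S * M * S)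
        = S * M * ((S * S⁻¹) * (S⁻¹ * S)) * (M * S) := by
          simp only [Matrix.mul_assoc]
      _ = S * (M * M) * S := by rw [hSSinv, hSinvS]; simp only [Matrix.mul_one,
          Matrix.mul_assoc]
      _ = S * (S⁻¹ * B * S⁻¹) * S := by rw [hMM]
      _ = (S * S⁻¹) * B * (S⁻¹ * S) := by simp only [Matrix.mul_assoc]
      _ = B := by rw [hSSinv, hSinvS, Matrix.one_mul, Matrix.mul_one]

/-- Uniqueness of the positive definite solution of `X B⁻¹ X = A`. -/
lemma riccati_unique {A B X : Matrix (Fin n) (Fin n) ℝ} (hA : A.PosDef) (hB : B.PosDef)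
    (hX : X.PosDef) (hric : X * B⁻¹ * X = A) : X = gmean B A := by
  set T := msqrt B with hT
  have hTpd : T.PosDef := msqrt_posDef hB
  have hTT : T * T = B := msqrt_mul_self hB.posSemidef
  have hTU : IsUnit T.det := (Matrix.isUnit_iff_isUnit_det T).mp hTpd.isUnit
  have hTTinv : T * T⁻¹ = 1 := Matrix.mul_nonsing_inv _ hTU
  have hTinvT : T⁻¹ * T = 1 := Matrix.nonsing_inv_mul _ hTU
  have hBinv : B⁻¹ = T⁻¹ * T⁻¹ := by rw [← hTT, Matrix.mul_inv_rev]
  have hTinvH : (T⁻¹)ᴴ = T⁻¹ := hTpd.inv.isHermitian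
  set Y := T⁻¹ * X * T⁻¹ with hY
  have hYpsd : Y.PosSemidef := by
    have := hX.posSemidef.conjTranspose_mul_mul_same (T⁻¹)
    rwa [hTinvH] at this
  have hinner : ((T⁻¹) * A * (T⁻¹)).PosSemidef := by
    have := hA.posSemidef.conjTranspose_mul_mul_same (T⁻¹)
    rwa [hTinvH] at this
  have hYsq : Y ^ 2 = T⁻¹ * A * T⁻¹ := by
    rw [pow_two, hY]
    calc T⁻¹ * X * T⁻¹ * (T⁻¹ * X * T⁻¹)
        = T⁻¹ * (X * (T⁻¹ * T⁻¹) * X) * T⁻¹ := by simp only [Matrix.mul_assoc]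
      _ = T⁻¹ * A * T⁻¹ := by rw [← hBinv, hric]
  have hYeq : Y = msqrt ((T⁻¹) * A * (T⁻¹)) := by
    rw [msqrt_eq hinner]
    exact ((CFC.sqrt_eq_iff _ _ hinner.nonneg hYpsd.nonneg).mpr (by rw [← sq]; exact hYsq)).symm
  show X = T * msqrt ((T⁻¹) * A * (T⁻¹)) * T
  rw [← hYeq, hY]
  calc X = (T * T⁻¹) * X * (T⁻¹ * T) := by rw [hTTinv, hTinvT, Matrix.one_mul, Matrix.mul_one]
    _ = T * (T⁻¹ * X * T⁻¹) * T := by simp only [Matrix.mul_assoc]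

end aux

/-- **Commutativity of the geometric mean.**  For all symmetric positive definite
matrices `A` and `B`, `A # B = B # A`, i.e.
`A^{1/2}(A^{-1/2} B A^{-1/2})^{1/2} A^{1/2} = B^{1/2}(B^{-1/2} A B^{-1/2})^{1/2} B^{1/2}`. -/
theorem statement12 (n : ℕ) (A B : Matrix (Fin n) (Fin n) ℝ)
    (hA : A.PosDef) (hB : B.PosDef) :
    gmean A B = gmean B A := by
  obtain ⟨hXpd, hric⟩ := gmean_riccati hA hB
  set X := gmean A B with hXdef
  -- from X A⁻¹ X = B deduce X B⁻¹ X = A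
  have hXU : IsUnit X.det := (Matrix.isUnit_iff_isUnit_det X).mp hXpd.isUnit
  have hAU : IsUnit A.det := (Matrix.isUnit_iff_isUnit_det A).mp hA.isUnit
  have hXXinv : X * X⁻¹ = 1 := Matrix.mul_nonsing_inv _ hXU
  have hXinvX : X⁻¹ * X = 1 := Matrix.nonsing_inv_mul _ hXU
  have hBinv : B⁻¹ = X⁻¹ * A * X⁻¹ := by
    rw [← hric, Matrix.mul_inv_rev, Matrix.mul_inv_rev,
      Matrix.nonsing_inv_nonsing_inv _ hAU, Matrix.mul_assoc]
  have hric' : X * B⁻¹ * X = A := by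
    rw [hBinv]
    calc X * (X⁻¹ * A * X⁻¹) * X
        = (X * X⁻¹) * A * (X⁻¹ * X) := by simp only [Matrix.mul_assoc]
      _ = A := by rw [hXXinv, hXinvX, Matrix.one_mul, Matrix.mul_one]
  exact riccati_unique hA hB hXpd hric'
end
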